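/- Let S be the unilateral shift on ℓ² and A = S + I. Then A is hyponormal but |A²| ≠ |A|². -/

import Mathlib

open scoped LinearPMap

noncomputable section

namespace AbsPaper

variable {H : Type} [NormedAddCommGroup H] [InnerProductSpace ℂ H] [CompleteSpace H]

/-- The composition `S ∘ T` of two unbounded operators, defined on the natural domain
`{x ∈ D(T) : T x ∈ D(S)}`. -/
def comp (S T : H →ₗ.[ℂ] H) : H →ₗ.[ℂ] H where
  domain := (S.domain.comap T.toFun).map T.domain.subtype
  toFun := S.toFun ∘ₗ (T.toFun.restrict (p := S.domain.comap T.toFun) (q := S.domain)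
      fun _ hx => hx) ∘ₗ
    (Submodule.equivMapOfInjective T.domain.subtype (Submodule.injective_subtype _)
      (S.domain.comap T.toFun)).symm.toLinearMap

/-- A bounded everywhere-defined operator viewed as an unbounded operator. -/
def ofCLM (B : H →L[ℂ] H) : H →ₗ.[ℂ] H := (B : H →ₗ[ℂ] H).toPMap ⊤

/-- An unbounded operator is positive if `⟪T x, x⟫ ≥ 0` on its domain. -/
def IsPositivePMap (T : H →ₗ.[ℂ] H) : Prop :=
  ∀ x : T.domain, 0 ≤ (inner ℂ (T x) (x : H) : ℂ).re ∧ (inner ℂ (T x) (x : H) : ℂ).im = 0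

/-- `S` is the (positive self-adjoint) square root of `T`. -/
def IsSqrtOf (S T : H →ₗ.[ℂ] H) : Prop :=
  IsSelfAdjoint S ∧ IsPositivePMap S ∧ comp S S = T

/-- `R` is the absolute value `|T| = √(T*T)` of `T`. -/
def IsAbsOf (R T : H →ₗ.[ℂ] H) : Prop := IsSqrtOf R (comp T† T)

/-- `R` is the absolute value `|B| = √(B*B)` of a bounded operator `B`. -/
def IsAbsCLM (R B : H →L[ℂ] H) : Prop :=
  IsSelfAdjoint R ∧ R.IsPositive ∧ R ∘L R = (ContinuousLinearMap.adjoint B) ∘L B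

/-- An unbounded operator is normal if it is densely defined, closed and `T*T = TT*`. -/
def IsNormalPMap (T : H →ₗ.[ℂ] H) : Prop :=
  Dense (T.domain : Set H) ∧ T.IsClosed ∧ comp T† T = comp T T†

/-- An unbounded operator is hyponormal if it is densely defined, `D(T) ⊆ D(T*)` and
`‖T* x‖ ≤ ‖T x‖` on `D(T)`. -/
def IsHyponormalPMap (T : H →ₗ.[ℂ] H) : Prop :=
  Dense (T.domain : Set H) ∧ T.domain ≤ T†.domain ∧
    ∀ (x : H) (hx : x ∈ T.domain) (hx' : x ∈ T†.domain), ‖T† ⟨x, hx'⟩‖ ≤ ‖T ⟨x, hx⟩‖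

/-- A bounded operator is hyponormal if `‖B* x‖ ≤ ‖B x‖` everywhere. -/
def IsHyponormalCLM (B : H →L[ℂ] H) : Prop :=
  ∀ x : H, ‖(ContinuousLinearMap.adjoint B) x‖ ≤ ‖B x‖

/-- The form order `T ≤ S` between positive self-adjoint unbounded operators:
`D(S^(1/2)) ⊆ D(T^(1/2))` and `‖T^(1/2) x‖ ≤ ‖S^(1/2) x‖` there. -/
def FormLE (T S : H →ₗ.[ℂ] H) : Prop :=
  ∀ sT sS : H →ₗ.[ℂ] H, IsSqrtOf sT T → IsSqrtOf sS S →
    sS.domain ≤ sT.domain ∧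
      ∀ (x : H) (hx : x ∈ sS.domain) (hx' : x ∈ sT.domain),
        ‖sT ⟨x, hx'⟩‖ ≤ ‖sS ⟨x, hx⟩‖

/-- The real part `(A + A*)/2` of an unbounded operator. -/
def rePart (A : H →ₗ.[ℂ] H) : H →ₗ.[ℂ] H := ((2 : ℂ)⁻¹ : ℂ) • (A + A†)

/-- The imaginary part `(A - A*)/(2i)` of an unbounded operator. -/
def imPart (A : H →ₗ.[ℂ] H) : H →ₗ.[ℂ] H := ((2 * Complex.I)⁻¹ : ℂ) • (A + -A†)

/-- `T` is boundedly invertible: bijective from its domain onto `H` with bounded inverse. -/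
def BoundedlyInvertible (T : H →ₗ.[ℂ] H) : Prop :=
  ∃ Tinv : H →L[ℂ] H, (∀ x : T.domain, Tinv (T x) = x) ∧
    ∀ y : H, ∃ hy : Tinv y ∈ T.domain, T ⟨Tinv y, hy⟩ = y

/-- The spectrum of an unbounded operator. -/
def specPMap (T : H →ₗ.[ℂ] H) : Set ℂ :=
  {lam : ℂ | ¬ BoundedlyInvertible (T + ofCLM (-(lam • (1 : H →L[ℂ] H))))}

/-- The `n`-th power of an unbounded operator. -/
def ppow (T : H →ₗ.[ℂ] H) : ℕ → (H →ₗ.[ℂ] H)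
  | 0 => ofCLM 1
  | n + 1 => comp T (ppow T n)

/-- `T` is quasinormal: `T = U|T|` is its polar decomposition and `U|T| ⊆ |T|U`. -/
def IsQuasinormalPMap (T : H →ₗ.[ℂ] H) : Prop :=
  Dense (T.domain : Set H) ∧ T.IsClosed ∧
    ∃ (U : H →L[ℂ] H) (R : H →ₗ.[ℂ] H), IsAbsOf R T ∧ (∀ x : H, ‖U x‖ ≤ ‖x‖) ∧
      T = comp (ofCLM U) R ∧ comp (ofCLM U) R ≤ comp R (ofCLM U)

/-- A projection-valued (spectral) measure on the Borel sets of `ℂ`. -/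
structure PVM (H : Type) [NormedAddCommGroup H] [InnerProductSpace ℂ H] [CompleteSpace H] where
  P : Set ℂ → (H →L[ℂ] H)
  selfAdjoint : ∀ s, MeasurableSet s → IsSelfAdjoint (P s)
  mul_inter : ∀ s t, MeasurableSet s → MeasurableSet t → P s ∘L P t = P (s ∩ t)
  empty : P ∅ = 0
  univ : P Set.univ = 1
  countably_additive : ∀ (f : ℕ → Set ℂ), (∀ n, MeasurableSet (f n)) →
    Pairwise (Function.onFun Disjoint f) → ∀ x : H,
      HasSum (fun n => P (f n) x) (P (⋃ n, f n) x)

/-- `E` is the spectral measure of the operator `A`. -/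
def IsSpectralMeasureOf (A : H →ₗ.[ℂ] H) (E : PVM H) : Prop :=
  ∃ μ : H → MeasureTheory.Measure ℂ,
    (∀ (x : H) (s : Set ℂ), MeasurableSet s →
        μ x s = ENNReal.ofReal ((inner ℂ (E.P s x) x : ℂ).re)) ∧
    (∀ x : H, x ∈ A.domain ↔ MeasureTheory.Integrable (fun z : ℂ => ‖z‖ ^ 2) (μ x)) ∧
    ∀ x : A.domain, (inner ℂ (A x) (x : H) : ℂ) = ∫ z : ℂ, z ∂(μ (x : H))

/-- Two (normal) unbounded operators strongly commute if their spectral measures commute. -/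
def StronglyCommutes (A B : H →ₗ.[ℂ] H) : Prop :=
  ∃ EA EB : PVM H, IsSpectralMeasureOf A EA ∧ IsSpectralMeasureOf B EB ∧
    ∀ s t : Set ℂ, MeasurableSet s → MeasurableSet t →
      EA.P s ∘L EB.P t = EB.P t ∘L EA.P s


/-- Auxiliary ring identity: if `a s = 1` and `((a+1)(s+1))² = (a+1)²(s+1)²`, then `s a = 1`. -/
lemma shift_alg {R : Type*} [Ring R] (a s : R) (h1 : a * s = 1)
    (hmul : ((a+1)*(s+1))*((a+1)*(s+1)) = ((a+1)*(a+1))*((s+1)*(s+1))) : s * a = 1 := by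
  have e2 : ((a + 1) * (a + 1)) * ((s + 1) * (s + 1))
      - ((a + 1) * (s + 1)) * ((a + 1) * (s + 1))
      = (a + 1) * ((a * s - s * a) * (s + 1)) := by noncomm_ring
  have e4 : (a + 1) * ((a * s - s * a) * (s + 1)) = 0 := by
    rw [← e2, hmul, sub_self]
  rw [h1] at e4
  have e5 : ((1 : R) - s * a) * (s + 1) = 1 - s * a := by
    have e : ((1 : R) - s * a) * (s + 1) = s + 1 - (s * (a * s) + s * a) := by
      noncomm_ring
    rw [h1] at e
    rw [e]; noncomm_ring
  have e6 : (a + 1) * ((1 : R) - s * a) = 1 - s * a := by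
    have e : (a + 1) * ((1 : R) - s * a) = a + 1 - ((a * s) * a + s * a) := by
      noncomm_ring
    rw [h1] at e
    rw [e]; noncomm_ring
  rw [e5, e6] at e4
  rwa [sub_eq_zero, eq_comm] at e4

/-- For the unilateral shift `S` on `ℓ²` (`S*S = 1`, `SS* ≠ 1`) and `A = S + 1`,
`A` is hyponormal but `|A²| ≠ |A|²`. -/
theorem stmt_7 (S : lp (fun _ : ℕ => ℂ) 2 →L[ℂ] lp (fun _ : ℕ => ℂ) 2)
    (hS1 : (ContinuousLinearMap.adjoint S) ∘L S = 1)
    (hS2 : S ∘L (ContinuousLinearMap.adjoint S) ≠ 1) :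
    IsHyponormalCLM (S + 1) ∧
      ∀ R1 R2 : lp (fun _ : ℕ => ℂ) 2 →L[ℂ] lp (fun _ : ℕ => ℂ) 2,
        IsAbsCLM R1 (S + 1) → IsAbsCLM R2 ((S + 1) ∘L (S + 1)) → R2 ≠ R1 ∘L R1 := by
  set a := ContinuousLinearMap.adjoint S with ha
  have haS' : ∀ y, a (S y) = y := by
    intro y
    have := congrArg (fun T => T y) hS1
    simpa using this
  have hadj : ContinuousLinearMap.adjoint (S + 1) = a + 1 := by
    rw [← ContinuousLinearMap.star_eq_adjoint, star_add, star_one,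
      ContinuousLinearMap.star_eq_adjoint]
  have hSinner : ∀ y, (inner ℂ (S y) (S y) : ℂ) = inner ℂ y y := by
    intro y
    have h2 := ContinuousLinearMap.adjoint_inner_left S y (S y)
    rw [← h2, haS' y]
  have hSnormsq : ∀ y : lp (fun _ : ℕ => ℂ) 2, ‖S y‖ ^ 2 = ‖y‖ ^ 2 := by
    intro y
    have := hSinner y
    rw [inner_self_eq_norm_sq_to_K, inner_self_eq_norm_sq_to_K] at this
    exact_mod_cast this
  have hSnorm : ∀ y : lp (fun _ : ℕ => ℂ) 2, ‖S y‖ = ‖y‖ := by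
    intro y
    have h := hSnormsq y
    nlinarith [norm_nonneg (S y), norm_nonneg y]
  have hanorm : ∀ y : lp (fun _ : ℕ => ℂ) 2, ‖a y‖ ≤ ‖y‖ := by
    intro y
    have h2 := ContinuousLinearMap.adjoint_inner_left S (a y) y
    -- h2 : ⟪a (a y?)...⟫ check at compile
    have hC : ‖a y‖ ^ 2 ≤ ‖y‖ * ‖a y‖ := by
      have e : (inner ℂ (a y) (a y) : ℂ) = inner ℂ y (S (a y)) :=
        ContinuousLinearMap.adjoint_inner_left S (a y) y
      have : (‖a y‖ : ℝ) ^ 2 = (inner ℂ y (S (a y)) : ℂ).re := by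
        rw [← e, inner_self_eq_norm_sq_to_K]
        norm_cast
      rw [this]
      calc (inner ℂ y (S (a y)) : ℂ).re ≤ ‖(inner ℂ y (S (a y)) : ℂ)‖ :=
            Complex.re_le_norm _
        _ ≤ ‖y‖ * ‖S (a y)‖ := norm_inner_le_norm _ _
        _ = ‖y‖ * ‖a y‖ := by rw [hSnorm]
    nlinarith [norm_nonneg (a y), norm_nonneg y, sq_nonneg (‖y‖ - ‖a y‖)]
  constructor
  · intro x
    rw [hadj]
    have hre : (inner ℂ (a x) x : ℂ).re = (inner ℂ (S x) x : ℂ).re := by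
      have e : (inner ℂ (a x) x : ℂ) = inner ℂ x (S x) :=
        ContinuousLinearMap.adjoint_inner_left S x x
      rw [e, ← inner_conj_symm, Complex.conj_re]
    have hsq : ‖(a + 1) x‖ ^ 2 ≤ ‖(S + 1) x‖ ^ 2 := by
      have h1 : (a + 1) x = a x + x := by simp
      have h2 : (S + 1) x = S x + x := by simp
      rw [h1, h2, @norm_add_sq ℂ, @norm_add_sq ℂ]
      simp only [RCLike.re_to_complex]
      rw [hre, hSnormsq]
      have := hanorm x
      nlinarith [norm_nonneg (a x), norm_nonneg x]
    nlinarith [norm_nonneg ((a + 1) x), norm_nonneg ((S + 1) x)]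
  · intro R1 R2 h1 h2 heq
    obtain ⟨-, -, hR1⟩ := h1
    obtain ⟨-, -, hR2⟩ := h2
    rw [heq, hR1, ContinuousLinearMap.adjoint_comp, hadj] at hR2
    have hmul : ((a + 1) * (S + 1)) * ((a + 1) * (S + 1))
        = ((a + 1) * (a + 1)) * ((S + 1) * (S + 1)) := hR2
    have key : S * a = 1 := shift_alg a S hS1 hmul
    exact hS2 key

end AbsPaper
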